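/- Under the setup of the previous statement (SNRs a_m/s_m nonincreasing for m ≥ 2), the gap between the optimal risk over the monotone set Γ (with γ₁ = 1) and the optimal risk over the hypercube [0,1]^M equals exactly s₁²/(a₁ + s₁): min_{γ ∈ Γ} R(γ) − min_{γ ∈ [0,1]^M} R(γ) = s₁ − a₁s₁/(a₁+s₁) = s₁²/(a₁+s₁). -/
import Mathlib

lemma key8 (a s γ : ℝ) (ha : 0 ≤ a) (hs : 0 < s) :
    a * s / (a + s) ≤ a * (1 - γ)^2 + s * γ^2 := by
  have h : 0 < a + s := by linarith
  rw [div_le_iff₀ h]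
  nlinarith [sq_nonneg ((a+s)*γ - a)]

lemma keq8 (a s : ℝ) (ha : 0 ≤ a) (hs : 0 < s) :
    a * (1 - a / (a + s))^2 + s * (a / (a + s))^2 = a * s / (a + s) := by
  have h : a + s ≠ 0 := by positivity
  field_simp
  ring

theorem stmt8 (M : ℕ) (hM : 2 ≤ M) (a s : ℕ → ℝ)
    (ha : ∀ m ∈ Finset.Icc 1 M, 0 ≤ a m) (hs : ∀ m ∈ Finset.Icc 1 M, 0 < s m)
    (hsnr : ∀ l, 2 ≤ l → l ≤ M - 1 → a (l+1) / s (l+1) ≤ a l / s l) :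
    IsLeast
      ((fun γ : ℕ → ℝ => ∑ m ∈ Finset.Icc 1 M, (a m * (1 - γ m)^2 + s m * γ m^2)) ''
        {γ | γ 1 = 1 ∧ (∀ m, 1 ≤ m → m < M → γ (m+1) ≤ γ m) ∧ 0 ≤ γ M})
      (s 1 + ∑ m ∈ Finset.Icc 2 M, a m * s m / (a m + s m)) ∧
    IsLeast
      ((fun γ : ℕ → ℝ => ∑ m ∈ Finset.Icc 1 M, (a m * (1 - γ m)^2 + s m * γ m^2)) ''
        {γ | ∀ m, 1 ≤ m → m ≤ M → 0 ≤ γ m ∧ γ m ≤ 1})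
      (∑ m ∈ Finset.Icc 1 M, a m * s m / (a m + s m)) ∧
    (s 1 + ∑ m ∈ Finset.Icc 2 M, a m * s m / (a m + s m))
      - ∑ m ∈ Finset.Icc 1 M, a m * s m / (a m + s m)
      = s 1 ^ 2 / (a 1 + s 1) := by
  have h1M : (1:ℕ) ∈ Finset.Icc 1 M := by simp; omega
  have ha1 := ha 1 h1M
  have hs1 := hs 1 h1M
  have has1 : 0 < a 1 + s 1 := by linarith
  have hsplit : Finset.Icc 1 M = insert 1 (Finset.Icc 2 M) := by
    ext x; simp [Finset.mem_Icc, Finset.mem_insert]; omega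
  have hnot : (1:ℕ) ∉ Finset.Icc 2 M := by simp
  have hmem2 : ∀ m ∈ Finset.Icc 2 M, m ∈ Finset.Icc 1 M := by
    intro m hm; simp only [Finset.mem_Icc] at *; omega
  refine ⟨⟨?_, ?_⟩, ⟨?_, ?_⟩, ?_⟩
  · -- membership for Γ
    refine ⟨fun m => if m = 1 then 1 else a m / (a m + s m), ⟨by simp, ?_, ?_⟩, ?_⟩
    · intro m h1 hlt
      have hm1 : m + 1 ≠ 1 := by omega
      have hmem : m + 1 ∈ Finset.Icc 1 M := by simp; omega
      have hpos : 0 < a (m+1) + s (m+1) := by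
        have := ha _ hmem; have := hs _ hmem; linarith
      rcases eq_or_lt_of_le h1 with h1 | h1
      · simp only [hm1, if_neg, ← h1, if_pos]
        simp
        have hmem' : (2:ℕ) ∈ Finset.Icc 1 M := by simp; omega
        have hS2 := hs _ hmem'
        have hA2 := ha _ hmem'
        exact div_le_one_of_le₀ (by linarith) (by linarith)
      · have hm2 : m ≠ 1 := by omega
        simp only [hm1, hm2, if_neg, if_false]
        have hmm : m ∈ Finset.Icc 1 M := by simp; omega
        have hpm : 0 < a m + s m := by
          have := ha _ hmm; have := hs _ hmm; linarith
        have hsn := hsnr m (by omega) (by omega)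
        rw [div_le_div_iff₀ hpos hpm]
        rw [div_le_div_iff₀ (hs _ hmem) (hs _ hmm)] at hsn
        nlinarith [ha _ hmem, ha _ hmm, hs _ hmem, hs _ hmm]
    · have hM1 : M ≠ 1 := by omega
      simp only [hM1, if_neg, if_false]
      have hmm : M ∈ Finset.Icc 1 M := by simp; omega
      have := ha _ hmm; have := hs _ hmm
      positivity
    · simp only
      rw [hsplit, Finset.sum_insert hnot]
      have h1 : a 1 * (1 - (if (1:ℕ) = 1 then (1:ℝ) else a 1 / (a 1 + s 1)))^2
          + s 1 * (if (1:ℕ) = 1 then (1:ℝ) else a 1 / (a 1 + s 1))^2 = s 1 := by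
        simp
      rw [h1]
      congr 1
      apply Finset.sum_congr rfl
      intro m hm
      have hm1 : m ≠ 1 := by simp at hm; omega
      rw [if_neg hm1]
      exact keq8 (a m) (s m) (ha _ (hmem2 m hm)) (hs _ (hmem2 m hm))
  · -- lower bound for Γ
    rintro y ⟨γ, ⟨hγ1, hmono, hγM⟩, rfl⟩
    simp only
    rw [hsplit, Finset.sum_insert hnot, hγ1]
    have h1 : a 1 * (1 - 1)^2 + s 1 * 1^2 = s 1 := by ring
    rw [h1]
    gcongr with m hm
    exact key8 _ _ _ (ha _ (hmem2 m hm)) (hs _ (hmem2 m hm))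
  · -- membership for hypercube
    refine ⟨fun m => a m / (a m + s m), ?_, ?_⟩
    · intro m h1 h2
      have hmm : m ∈ Finset.Icc 1 M := by simp; omega
      have hA := ha _ hmm; have hS := hs _ hmm
      have hpos : 0 < a m + s m := by linarith
      constructor
      · positivity
      · rw [div_le_one hpos]; linarith
    · simp only
      apply Finset.sum_congr rfl
      intro m hm
      exact keq8 _ _ (ha _ hm) (hs _ hm)
  · -- lower bound for hypercube
    rintro y ⟨γ, hγ, rfl⟩
    simp only
    gcongr with m hm
    exact key8 _ _ _ (ha _ hm) (hs _ hm)
  · rw [hsplit, Finset.sum_insert hnot]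
    have : s 1 - a 1 * s 1 / (a 1 + s 1) = s 1 ^ 2 / (a 1 + s 1) := by
      field_simp
      ring
    linarith [this]
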